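/- For the 1→2 universal optimal cloning channel N : L(ℂ^d) → L(ℂ^d ⊗ ℂ^d), N(ρ) = (2/(d+1))·P_s(ρ ⊗ 𝟙)P_s, and any binary discrimination game g = diag(g_0, 1−g_0) with 1/2 ≤ g_0 ≤ 1, the utility is U(N, g) = (d + g_0)/(d + 1). In particular ‖g_0·N(|0⟩⟨0|) − (1−g_0)·N(|1⟩⟨1|)‖_1 = (d + 2g_0 − 1)/(d+1) for orthonormal |0⟩, |1⟩. -/

import Mathlib

open Matrix Kronecker
open scoped ComplexOrder

set_option linter.unusedSectionVars false
set_option maxHeartbeats 4000000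

noncomputable section

variable {n : Type*} [Fintype n] [DecidableEq n]

/-- A density operator: positive semidefinite with unit trace. -/
def IsDensity (ρ : Matrix n n ℂ) : Prop := ρ.PosSemidef ∧ ρ.trace = 1

/-- A POVM: positive semidefinite effects summing to the identity. -/
def IsPOVM {m : ℕ} (π : Fin m → Matrix n n ℂ) : Prop :=
  (∀ y, (π y).PosSemidef) ∧ ∑ y, π y = 1

/-- The Choi matrix of a map on matrices. -/
def choi {p q : Type*} [Fintype p] [DecidableEq p] [Fintype q] [DecidableEq q]
    (Φ : Matrix p p ℂ → Matrix q q ℂ) : Matrix (p × q) (p × q) ℂ :=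
  ∑ i, ∑ j, (Matrix.single i j (1 : ℂ)) ⊗ₖ (Φ (Matrix.single i j (1 : ℂ)))

/-- Completely positive trace preserving linear map. -/
def IsCPTP {p q : Type*} [Fintype p] [DecidableEq p] [Fintype q] [DecidableEq q]
    (Φ : Matrix p p ℂ → Matrix q q ℂ) : Prop :=
  IsLinearMap ℂ Φ ∧ (choi Φ).PosSemidef ∧ ∀ ρ, (Φ ρ).trace = ρ.trace

/-- The average payoff of game `g`, channel `Φ`, encoding `ρ`, decoding `π`. -/
def payoff {p q : Type*} [Fintype p] [DecidableEq p] [Fintype q] [DecidableEq q]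
    {nn m : ℕ} (g : Fin nn → Fin m → ℝ) (Φ : Matrix p p ℂ → Matrix q q ℂ)
    (ρ : Fin nn → Matrix p p ℂ) (π : Fin m → Matrix q q ℂ) : ℝ :=
  ∑ x, ∑ y, ((Φ (ρ x) * π y).trace).re * g x y

/-- The communication utility of channel `Φ` for game `g`. -/
def utility {p q : Type*} [Fintype p] [DecidableEq p] [Fintype q] [DecidableEq q]
    {nn m : ℕ} (g : Fin nn → Fin m → ℝ) (Φ : Matrix p p ℂ → Matrix q q ℂ) : ℝ :=
  sSup {u : ℝ | ∃ ρ π, (∀ x, IsDensity (ρ x)) ∧ IsPOVM π ∧ u = payoff g Φ ρ π}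

/-- The trace norm (sum of singular values). -/
def traceNorm (A : Matrix n n ℂ) : ℝ :=
  ∑ i, Real.sqrt ((Matrix.posSemidef_conjTranspose_mul_self A).1.eigenvalues i)

/-- Helstrom utility of a channel for the binary discrimination game diag(g₀, 1-g₀). -/
def helstromUtility {p q : Type*} [Fintype p] [DecidableEq p] [Fintype q] [DecidableEq q]
    (Φ : Matrix p p ℂ → Matrix q q ℂ) (g₀ : ℝ) : ℝ :=
  sSup {u : ℝ | ∃ ρ₀ ρ₁, IsDensity ρ₀ ∧ IsDensity ρ₁ ∧
    u = (1 + traceNorm ((g₀ : ℂ) • Φ ρ₀ - ((1 - g₀ : ℝ) : ℂ) • Φ ρ₁)) / 2}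

/-- The swap operator on `ℂ^d ⊗ ℂ^d`. -/
def swapMat (d : ℕ) : Matrix (Fin d × Fin d) (Fin d × Fin d) ℂ :=
  Matrix.of fun p q => if p.1 = q.2 ∧ p.2 = q.1 then 1 else 0

/-- The projector onto the symmetric subspace of `ℂ^d ⊗ ℂ^d`. -/
def symProj (d : ℕ) : Matrix (Fin d × Fin d) (Fin d × Fin d) ℂ :=
  ((1 / 2 : ℂ)) • (1 + swapMat d)

/-- The 1 → 2 universal optimal cloning channel. -/
def cloning (d : ℕ) (ρ : Matrix (Fin d) (Fin d) ℂ) :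
    Matrix (Fin d × Fin d) (Fin d × Fin d) ℂ :=
  ((2 / (d + 1) : ℝ) : ℂ) • (symProj d * (ρ ⊗ₖ (1 : Matrix (Fin d) (Fin d) ℂ)) * symProj d)

/-! ### swap and symmetric projector basics -/

lemma swapMat_conjTranspose (d : ℕ) : (swapMat d)ᴴ = swapMat d := by
  ext ⟨i,j⟩ ⟨k,l⟩
  simp [swapMat, conjTranspose_apply, and_comm, eq_comm]

lemma swapMat_mul_swapMat (d : ℕ) : swapMat d * swapMat d = 1 := by
  ext ⟨i,j⟩ ⟨k,l⟩
  simp [swapMat, mul_apply, Fintype.sum_prod_type, one_apply, Prod.ext_iff, ite_and, eq_comm]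

lemma swapMat_mul_kron {d : ℕ} (A B : Matrix (Fin d) (Fin d) ℂ) :
    swapMat d * (A ⊗ₖ B) = (B ⊗ₖ A) * swapMat d := by
  ext ⟨i,j⟩ ⟨k,l⟩
  simp [swapMat, mul_apply, Fintype.sum_prod_type, kroneckerMap_apply, ite_and, mul_comm]

lemma symProj_conjTranspose (d : ℕ) : (symProj d)ᴴ = symProj d := by
  rw [symProj, conjTranspose_smul, conjTranspose_add, conjTranspose_one, swapMat_conjTranspose]
  norm_num

variable {d : ℕ}

lemma rS_S (M : Matrix (Fin d × Fin d) (Fin d × Fin d) ℂ) :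
    swapMat d * (swapMat d * M) = M := by
  rw [← mul_assoc, swapMat_mul_swapMat, one_mul]

lemma rS_k (A B : Matrix (Fin d) (Fin d) ℂ) (M : Matrix (Fin d × Fin d) (Fin d × Fin d) ℂ) :
    swapMat d * ((A ⊗ₖ B) * M) = (B ⊗ₖ A) * (swapMat d * M) := by
  rw [← mul_assoc, swapMat_mul_kron, mul_assoc]

lemma k_k (A B C D : Matrix (Fin d) (Fin d) ℂ) :
    (A ⊗ₖ B) * (C ⊗ₖ D) = (A * C) ⊗ₖ (B * D) := (mul_kronecker_mul A C B D).symm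

lemma rk_k (A B C D : Matrix (Fin d) (Fin d) ℂ) (M : Matrix (Fin d × Fin d) (Fin d × Fin d) ℂ) :
    (A ⊗ₖ B) * ((C ⊗ₖ D) * M) = ((A * C) ⊗ₖ (B * D)) * M := by
  rw [← mul_assoc, ← mul_kronecker_mul]

lemma symProj_expand (X : Matrix (Fin d × Fin d) (Fin d × Fin d) ℂ) :
    symProj d * X * symProj d
      = (1/4 : ℂ) • (X + swapMat d * X + X * swapMat d + swapMat d * X * swapMat d) := by
  simp only [symProj, smul_mul_assoc, mul_smul_comm, smul_smul, add_mul, mul_add, one_mul, mul_one]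
  ring_nf
  module

lemma sand_kron (A B : Matrix (Fin d) (Fin d) ℂ) :
    symProj d * (A ⊗ₖ B) * symProj d
      = (1/4 : ℂ) • (A ⊗ₖ B + B ⊗ₖ A + (B ⊗ₖ A) * swapMat d + (A ⊗ₖ B) * swapMat d) := by
  rw [symProj_expand]
  rw [swapMat_mul_kron, mul_assoc, swapMat_mul_swapMat, mul_one]
  module

lemma trace_kron_mul_swap (A B : Matrix (Fin d) (Fin d) ℂ) :
    ((A ⊗ₖ B) * swapMat d).trace = (A * B).trace := by
  rw [Matrix.trace, Matrix.trace]
  rw [Fintype.sum_prod_type]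
  simp only [Matrix.diag, mul_apply, swapMat, Matrix.of_apply, kroneckerMap_apply,
    mul_ite, mul_one, mul_zero, Fintype.sum_prod_type, ite_and]
  simp [Finset.sum_ite_eq, Finset.sum_ite_eq']

lemma trace_sand (A B : Matrix (Fin d) (Fin d) ℂ) :
    (symProj d * (A ⊗ₖ B) * symProj d).trace
      = (1/2 : ℂ) * (A.trace * B.trace + (A * B).trace) := by
  rw [sand_kron, Matrix.trace_smul]
  rw [Matrix.trace_add, Matrix.trace_add, Matrix.trace_add, Matrix.trace_kronecker,
    Matrix.trace_kronecker, trace_kron_mul_swap, trace_kron_mul_swap, Matrix.trace_mul_comm B A]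
  simp only [smul_eq_mul]
  ring

/-! ### generic matrix lemmas -/

lemma vecMulVec_mul_vecMulVec' (a b u w : n → ℂ) :
    vecMulVec a b * vecMulVec u w = (b ⬝ᵥ u) • vecMulVec a w := by
  ext i j
  simp [vecMulVec_apply, mul_apply, dotProduct, Finset.mul_sum, Finset.sum_mul]
  congr 1; ext k; ring

lemma trace_vecMulVec (a b : n → ℂ) : (vecMulVec a b).trace = a ⬝ᵥ b := by
  simp [Matrix.trace, Matrix.diag, vecMulVec_apply, dotProduct]

lemma vecMulVec_conjTranspose (v : n → ℂ) :
    (vecMulVec v (star v))ᴴ = vecMulVec v (star v) := by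
  ext i j
  simp [vecMulVec_apply, conjTranspose_apply, mul_comm]

lemma vecMulVec_posSemidef (v : n → ℂ) : (vecMulVec v (star v)).PosSemidef := by
  exact Matrix.posSemidef_vecMulVec_self_star v

lemma star_dot_comm (u w : n → ℂ) : star u ⬝ᵥ w = star (star w ⬝ᵥ u) := by
  simp only [dotProduct, star_sum, Pi.star_apply, star_mul', star_star]
  congr 1; ext i; exact mul_comm _ _

lemma proj_compl_posSemidef {v : n → ℂ}
    (hv : star v ⬝ᵥ v = 1) : ((1 : Matrix n n ℂ) - vecMulVec v (star v)).PosSemidef := by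
  set B := (1 : Matrix n n ℂ) - vecMulVec v (star v) with hB
  have hherm : Bᴴ = B := by
    rw [hB, conjTranspose_sub, conjTranspose_one, vecMulVec_conjTranspose]
  have hsq : B * B = B := by
    rw [hB, sub_mul, mul_sub, mul_sub, one_mul, mul_one, one_mul,
      vecMulVec_mul_vecMulVec', hv, one_smul]
    abel
  have := Matrix.posSemidef_conjTranspose_mul_self B
  rwa [hherm, hsq] at this

lemma kron_sub_right (A B C : Matrix (Fin d) (Fin d) ℂ) :
    A ⊗ₖ (B - C) = A ⊗ₖ B - A ⊗ₖ C := by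
  ext ⟨i,j⟩ ⟨k,l⟩
  simp [kroneckerMap_apply, mul_sub]

lemma kron_sub_left (A B C : Matrix (Fin d) (Fin d) ℂ) :
    (A - B) ⊗ₖ C = A ⊗ₖ C - B ⊗ₖ C := by
  ext ⟨i,j⟩ ⟨k,l⟩
  simp [kroneckerMap_apply, sub_mul]

lemma sand_posSemidef {X : Matrix (Fin d × Fin d) (Fin d × Fin d) ℂ}
    (hX : X.PosSemidef) : (symProj d * X * symProj d).PosSemidef := by
  have := hX.mul_mul_conjTranspose_same (symProj d)
  rwa [symProj_conjTranspose] at this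

lemma psd_smul {M : Matrix n n ℂ} (hM : M.PosSemidef) {r : ℝ} (hr : 0 ≤ r) :
    ((r : ℂ) • M).PosSemidef := by
  exact hM.smul (Complex.zero_le_real.mpr hr)

lemma trace_unitary_conj (U : Matrix.unitaryGroup n ℂ) (D : Matrix n n ℂ) :
    ((U : Matrix n n ℂ) * D * (star U : Matrix n n ℂ)).trace = D.trace := by
  rw [Matrix.trace_mul_cycle]
  have h : (star U : Matrix n n ℂ) * (U : Matrix n n ℂ) = 1 := by
    simpa using U.2.1
  rw [h, one_mul]

open scoped MatrixOrder in
lemma traceNorm_eq_of_sq {A C : Matrix n n ℂ} (hC : C.PosSemidef) (h : C * C = Aᴴ * A) :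
    traceNorm A = (C.trace).re := by
  have hB := Matrix.posSemidef_conjTranspose_mul_self A
  have hCB : C = CFC.sqrt (Aᴴ * A) := ((CFC.sqrt_eq_iff _ _ hB.nonneg hC.nonneg).mpr h).symm
  rw [hCB, CFC.sqrt_eq_cfc, cfc_nnreal_eq_real _ (Aᴴ * A), hB.1.cfc_eq, Matrix.IsHermitian.cfc,
    Unitary.conjStarAlgAut_apply]
  rw [trace_unitary_conj hB.1.eigenvectorUnitary]
  rw [Matrix.trace_diagonal]
  simp [traceNorm, max_eq_left (hB.eigenvalues_nonneg _)]

lemma posSemidef_trace_nonneg {M : Matrix n n ℂ} (hM : M.PosSemidef) : 0 ≤ (M.trace).re := by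
  have h : ∀ i, 0 ≤ (M i i).re := by
    intro i
    have := hM.re_dotProduct_nonneg (Pi.single i 1)
    simpa [dotProduct, mulVec, Pi.single_apply] using this
  rw [Matrix.trace]
  rw [Complex.re_sum]
  exact Finset.sum_nonneg fun i _ => h i

open scoped MatrixOrder in
lemma psd_mul_trace_nonneg {A B : Matrix n n ℂ} (hA : A.PosSemidef) (hB : B.PosSemidef) :
    0 ≤ ((A * B).trace).re := by
  obtain ⟨X, hX⟩ := CStarAlgebra.nonneg_iff_eq_star_mul_self.mp hA.nonneg
  have h2 : (A * B).trace = (X * B * Xᴴ).trace := by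
    rw [hX, star_eq_conjTranspose, Matrix.mul_assoc, Matrix.trace_mul_comm, Matrix.mul_assoc]
  rw [h2]
  exact posSemidef_trace_nonneg (hB.mul_mul_conjTranspose_same _)

lemma kron_conjTranspose {m : Type*} [Fintype m] (A : Matrix n n ℂ) (B : Matrix m m ℂ) :
    (A ⊗ₖ B)ᴴ = Aᴴ ⊗ₖ Bᴴ := by
  ext ⟨i,j⟩ ⟨k,l⟩
  simp [conjTranspose_apply, kroneckerMap_apply]

lemma kron_posSemidef {m : Type*} [Fintype m] [DecidableEq m]
    {A : Matrix n n ℂ} {B : Matrix m m ℂ} (hA : A.PosSemidef) (hB : B.PosSemidef) :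
    (A ⊗ₖ B).PosSemidef := by
  exact hA.kronecker hB

lemma unitary_star_mul (U : Matrix.unitaryGroup n ℂ) :
    (star U : Matrix n n ℂ) * (U : Matrix n n ℂ) = 1 := by
  simpa using U.2.1

lemma unitary_mul_star (U : Matrix.unitaryGroup n ℂ) :
    (U : Matrix n n ℂ) * (star U : Matrix n n ℂ) = 1 := by
  simpa using U.2.2

lemma conj_mul_conj (U : Matrix.unitaryGroup n ℂ) (f g : n → ℂ) :
    ((U : Matrix n n ℂ) * diagonal f * (star U : Matrix n n ℂ)) *
      ((U : Matrix n n ℂ) * diagonal g * (star U : Matrix n n ℂ))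
    = (U : Matrix n n ℂ) * diagonal (fun i => f i * g i) * (star U : Matrix n n ℂ) := by
  have h : (star U : Matrix n n ℂ) * (U : Matrix n n ℂ) = 1 := unitary_star_mul U
  calc ((U : Matrix n n ℂ) * diagonal f * (star U : Matrix n n ℂ)) *
      ((U : Matrix n n ℂ) * diagonal g * (star U : Matrix n n ℂ))
      = (U : Matrix n n ℂ) * diagonal f * (((star U : Matrix n n ℂ) * (U : Matrix n n ℂ))
          * (diagonal g * (star U : Matrix n n ℂ))) := by
        simp only [mul_assoc]
    _ = (U : Matrix n n ℂ) * (diagonal f * diagonal g) * (star U : Matrix n n ℂ) := by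
        rw [h, one_mul]; simp only [mul_assoc]
    _ = _ := by rw [diagonal_mul_diagonal]

lemma posSemidef_conj_diag (U : Matrix.unitaryGroup n ℂ) {f : n → ℝ} (hf : ∀ i, 0 ≤ f i) :
    ((U : Matrix n n ℂ) * diagonal (fun i => (f i : ℂ)) * (star U : Matrix n n ℂ)).PosSemidef := by
  have hd : (diagonal (fun i => (f i : ℂ))).PosSemidef := by
    refine Matrix.posSemidef_diagonal_iff.mpr fun i => ?_
    exact_mod_cast Complex.zero_le_real.mpr (hf i)
  have := hd.mul_mul_conjTranspose_same (U : Matrix n n ℂ)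
  rwa [← Matrix.star_eq_conjTranspose] at this

lemma spectral_sum {A : Matrix n n ℂ} (hA : A.IsHermitian) :
    A = ∑ i, (hA.eigenvalues i : ℂ) •
      vecMulVec (⇑(hA.eigenvectorBasis i)) (star ⇑(hA.eigenvectorBasis i)) := by
  conv_lhs => rw [hA.spectral_theorem]
  ext a b
  rw [Matrix.sum_apply]
  simp only [Unitary.conjStarAlgAut_apply, mul_apply, diagonal_apply, Function.comp_apply, Matrix.smul_apply, vecMulVec_apply,
    Matrix.star_apply, Pi.star_apply, smul_eq_mul]
  simp only [mul_ite, mul_zero, Finset.sum_ite_eq', Finset.mem_univ, if_true,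
    Matrix.IsHermitian.eigenvectorUnitary_apply]
  congr 1; ext j; rw [mul_right_comm, mul_comm]; rfl

lemma eigenvectorBasis_unit {A : Matrix n n ℂ} (hA : A.IsHermitian) (i : n) :
    star ⇑(hA.eigenvectorBasis i) ⬝ᵥ ⇑(hA.eigenvectorBasis i) = 1 := by
  have h := hA.eigenvectorBasis.orthonormal.1 i
  have := @inner_self_eq_norm_sq_to_K ℂ _ _ _ _ (hA.eigenvectorBasis i)
  rw [h] at this
  rw [EuclideanSpace.inner_eq_star_dotProduct] at this
  simpa [dotProduct_comm] using this

/-! ### the key algebraic identity -/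

lemma key_sq (g h : ℂ) (ρ₀ ρ₁ : Matrix (Fin d) (Fin d) ℂ)
    (h00 : ρ₀*ρ₀ = ρ₀) (h11 : ρ₁*ρ₁ = ρ₁) (h01 : ρ₀*ρ₁ = 0) (h10 : ρ₁*ρ₀ = 0) :
    (g • (symProj d * (ρ₀ ⊗ₖ 1) * symProj d) + h • (symProj d * (ρ₁ ⊗ₖ 1) * symProj d)
      - (2*h) • (symProj d * (ρ₀ ⊗ₖ ρ₁) * symProj d))
    * (g • (symProj d * (ρ₀ ⊗ₖ 1) * symProj d) + h • (symProj d * (ρ₁ ⊗ₖ 1) * symProj d)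
      - (2*h) • (symProj d * (ρ₀ ⊗ₖ ρ₁) * symProj d))
    = (g • (symProj d * (ρ₀ ⊗ₖ 1) * symProj d) - h • (symProj d * (ρ₁ ⊗ₖ 1) * symProj d))
    * (g • (symProj d * (ρ₀ ⊗ₖ 1) * symProj d) - h • (symProj d * (ρ₁ ⊗ₖ 1) * symProj d)) := by
  simp only [sand_kron, smul_smul]
  simp only [smul_add, smul_sub, sub_mul, mul_sub, add_mul, mul_add, smul_mul_assoc,
    mul_smul_comm, smul_smul, mul_assoc]
  simp only [rk_k, rS_k, rS_S, k_k, swapMat_mul_kron, swapMat_mul_swapMat,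
    mul_one, one_mul, h00, h11, h01, h10, zero_kronecker, kronecker_zero, zero_mul, mul_zero,
    smul_zero, add_zero, zero_add]
  module

lemma key_decomp (g h : ℂ) (ρ₀ ρ₁ : Matrix (Fin d) (Fin d) ℂ) :
    g • (symProj d * (ρ₀ ⊗ₖ 1) * symProj d) + h • (symProj d * (ρ₁ ⊗ₖ 1) * symProj d)
      - (2*h) • (symProj d * (ρ₀ ⊗ₖ ρ₁) * symProj d)
    = h • (symProj d * (ρ₀ ⊗ₖ (1 - ρ₁) + (1 - ρ₀) ⊗ₖ ρ₁) * symProj d)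
      + (g - h) • (symProj d * (ρ₀ ⊗ₖ 1) * symProj d) := by
  rw [Matrix.mul_add, Matrix.add_mul, kron_sub_right, kron_sub_left]
  rw [Matrix.mul_sub, Matrix.sub_mul, Matrix.mul_sub, Matrix.sub_mul]
  simp only [sand_kron]
  module

lemma sand_swap_arg (A B : Matrix (Fin d) (Fin d) ℂ) :
    symProj d * (A ⊗ₖ B) * symProj d = symProj d * (B ⊗ₖ A) * symProj d := by
  rw [sand_kron, sand_kron]
  module

lemma sand_herm {K : Matrix (Fin d × Fin d) (Fin d × Fin d) ℂ} (hK : Kᴴ = K) :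
    (symProj d * K * symProj d)ᴴ = symProj d * K * symProj d := by
  rw [conjTranspose_mul, conjTranspose_mul, symProj_conjTranspose, hK, mul_assoc]

lemma posSemidef_one' : (1 : Matrix n n ℂ).PosSemidef := by
  have := Matrix.posSemidef_conjTranspose_mul_self (1 : Matrix n n ℂ)
  simpa using this

lemma pure_traceNorm (hd : 2 ≤ d) {g₀ : ℝ} (hg0 : 1 / 2 ≤ g₀) (hg1 : g₀ ≤ 1)
    (v₀ v₁ : Fin d → ℂ)
    (h₀ : star v₀ ⬝ᵥ v₀ = 1) (h₁ : star v₁ ⬝ᵥ v₁ = 1) (h01 : star v₀ ⬝ᵥ v₁ = 0) :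
    traceNorm ((g₀ : ℂ) • cloning d (Matrix.vecMulVec v₀ (star v₀))
        - ((1 - g₀ : ℝ) : ℂ) • cloning d (Matrix.vecMulVec v₁ (star v₁)))
      = (d + 2 * g₀ - 1) / (d + 1) := by
  have h10 : star v₁ ⬝ᵥ v₀ = 0 := by
    rw [star_dot_comm, h01, star_zero]
  set ρ₀ := Matrix.vecMulVec v₀ (star v₀) with hρ₀
  set ρ₁ := Matrix.vecMulVec v₁ (star v₁) with hρ₁
  have h00 : ρ₀ * ρ₀ = ρ₀ := by rw [hρ₀, vecMulVec_mul_vecMulVec', h₀, one_smul]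
  have h11 : ρ₁ * ρ₁ = ρ₁ := by rw [hρ₁, vecMulVec_mul_vecMulVec', h₁, one_smul]
  have h01' : ρ₀ * ρ₁ = 0 := by rw [hρ₀, hρ₁, vecMulVec_mul_vecMulVec', h01, zero_smul]
  have h10' : ρ₁ * ρ₀ = 0 := by rw [hρ₀, hρ₁, vecMulVec_mul_vecMulVec', h10, zero_smul]
  set g : ℂ := (g₀ : ℂ) with hg
  set h : ℂ := ((1 - g₀ : ℝ) : ℂ) with hh
  set γ : ℂ := ((2 / (d + 1) : ℝ) : ℂ) with hγ
  set M₀ := symProj d * (ρ₀ ⊗ₖ (1 : Matrix (Fin d) (Fin d) ℂ)) * symProj d with hM₀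
  set M₁ := symProj d * (ρ₁ ⊗ₖ (1 : Matrix (Fin d) (Fin d) ℂ)) * symProj d with hM₁
  set T := symProj d * (ρ₀ ⊗ₖ ρ₁) * symProj d with hT
  have hA : (g₀ : ℂ) • cloning d ρ₀ - ((1 - g₀ : ℝ) : ℂ) • cloning d ρ₁
      = γ • (g • M₀ - h • M₁) := by
    rw [cloning, cloning, smul_sub]
    rw [smul_comm γ g, smul_comm γ h]
  set C := γ • (g • M₀ + h • M₁ - (2 * h) • T) with hC
  have hCpsd : C.PosSemidef := by
    have hd1 : g • M₀ + h • M₁ - (2 * h) • T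
        = h • (symProj d * (ρ₀ ⊗ₖ (1 - ρ₁) + (1 - ρ₀) ⊗ₖ ρ₁) * symProj d)
          + (g - h) • M₀ := key_decomp g h ρ₀ ρ₁
    rw [hC, hd1]
    have hsand : (symProj d * (ρ₀ ⊗ₖ (1 - ρ₁) + (1 - ρ₀) ⊗ₖ ρ₁) * symProj d).PosSemidef := by
      refine sand_posSemidef (Matrix.PosSemidef.add ?_ ?_)
      · exact kron_posSemidef (vecMulVec_posSemidef v₀) (proj_compl_posSemidef h₁)
      · exact kron_posSemidef (proj_compl_posSemidef h₀) (vecMulVec_posSemidef v₁)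
    have hM₀psd : M₀.PosSemidef :=
      sand_posSemidef (kron_posSemidef (vecMulVec_posSemidef v₀) posSemidef_one')
    have hgh : g - h = ((2 * g₀ - 1 : ℝ) : ℂ) := by rw [hg, hh]; push_cast; ring
    have hsum : (h • (symProj d * (ρ₀ ⊗ₖ (1 - ρ₁) + (1 - ρ₀) ⊗ₖ ρ₁) * symProj d)
        + (g - h) • M₀).PosSemidef := by
      refine Matrix.PosSemidef.add ?_ ?_
      · exact psd_smul hsand (by linarith)
      · rw [hgh]; exact psd_smul hM₀psd (by linarith)
    exact psd_smul hsum (by positivity)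
  have hherm : ∀ (K : Matrix (Fin d) (Fin d) ℂ), Kᴴ = K →
      (symProj d * (K ⊗ₖ (1 : Matrix (Fin d) (Fin d) ℂ)) * symProj d)ᴴ
        = symProj d * (K ⊗ₖ (1 : Matrix (Fin d) (Fin d) ℂ)) * symProj d := by
    intro K hK
    exact sand_herm (by rw [kron_conjTranspose, hK, conjTranspose_one])
  have hAherm : (γ • (g • M₀ - h • M₁))ᴴ = γ • (g • M₀ - h • M₁) := by
    rw [conjTranspose_smul, conjTranspose_sub, conjTranspose_smul, conjTranspose_smul]
    rw [hM₀, hM₁, hherm ρ₀ (vecMulVec_conjTranspose v₀), hherm ρ₁ (vecMulVec_conjTranspose v₁)]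
    rw [hg, hh, hγ]
    norm_num
  have hsq : C * C = (γ • (g • M₀ - h • M₁))ᴴ * (γ • (g • M₀ - h • M₁)) := by
    rw [hAherm, hC]
    rw [smul_mul_smul_comm, smul_mul_smul_comm]
    congr 1
    exact key_sq g h ρ₀ ρ₁ h00 h11 h01' h10'
  have htn : traceNorm ((g₀ : ℂ) • cloning d ρ₀ - ((1 - g₀ : ℝ) : ℂ) • cloning d ρ₁)
      = (C.trace).re := by
    rw [hA]
    exact traceNorm_eq_of_sq hCpsd hsq
  rw [htn]
  -- compute the trace of C
  have htr0 : ρ₀.trace = 1 := by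
    rw [hρ₀, _root_.trace_vecMulVec, dotProduct_comm, h₀]
  have htr1 : ρ₁.trace = 1 := by
    rw [hρ₁, _root_.trace_vecMulVec, dotProduct_comm, h₁]
  have htrI : (1 : Matrix (Fin d) (Fin d) ℂ).trace = (d : ℂ) := by
    simp [Matrix.trace_one]
  have hCtr : C.trace = (((d + 2 * g₀ - 1) / (d + 1) : ℝ) : ℂ) := by
    rw [hC, Matrix.trace_smul, Matrix.trace_sub, Matrix.trace_add,
      Matrix.trace_smul, Matrix.trace_smul, Matrix.trace_smul]
    rw [hM₀, hM₁, hT, trace_sand, trace_sand, trace_sand]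
    simp only [Matrix.mul_one, h01', Matrix.trace_zero, htr0, htr1, htrI, smul_eq_mul]
    have hdne : ((d : ℂ) + 1) ≠ 0 := by
      have : ((d : ℝ) + 1) > 0 := by positivity
      intro hcon
      have := congrArg Complex.re hcon
      push_cast at this
      linarith
    rw [hγ, hg, hh]
    push_cast
    field_simp
    ring
  rw [hCtr, Complex.ofReal_re]

lemma cloning_trace (ρ : Matrix (Fin d) (Fin d) ℂ) : (cloning d ρ).trace = ρ.trace := by
  rw [cloning, Matrix.trace_smul, trace_sand, Matrix.mul_one]
  have htrI : (1 : Matrix (Fin d) (Fin d) ℂ).trace = (d : ℂ) := by simp [Matrix.trace_one]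
  rw [htrI]
  have hγ : ((2 / (d + 1) : ℝ) : ℂ) = 2 / ((d : ℂ) + 1) := by push_cast; ring
  have hdne : ((d : ℂ) + 1) ≠ 0 := by
    intro hcon
    have := congrArg Complex.re hcon
    push_cast at this
    linarith
  rw [hγ, smul_eq_mul]
  field_simp

def cloningLM (d : ℕ) : Matrix (Fin d) (Fin d) ℂ →ₗ[ℂ] Matrix (Fin d × Fin d) (Fin d × Fin d) ℂ where
  toFun := cloning d
  map_add' x y := by
    simp only [cloning, add_kronecker, Matrix.mul_add, Matrix.add_mul, smul_add]
  map_smul' c x := by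
    simp only [cloning, smul_kronecker, RingHom.id_apply, Matrix.mul_smul, Matrix.smul_mul]
    rw [smul_comm]

lemma cloning_isHermitian {ρ : Matrix (Fin d) (Fin d) ℂ} (hρ : ρ.IsHermitian) :
    (cloning d ρ).IsHermitian := by
  rw [Matrix.IsHermitian, cloning, conjTranspose_smul]
  rw [sand_herm (by rw [kron_conjTranspose, hρ.eq, conjTranspose_one])]
  norm_num

lemma Mu_trace {u : Fin d → ℂ} (hu : star u ⬝ᵥ u = 1) :
    ((symProj d * ((vecMulVec u (star u)) ⊗ₖ (1 : Matrix (Fin d) (Fin d) ℂ)) * symProj d)).trace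
      = (((d + 1) / 2 : ℝ) : ℂ) := by
  rw [trace_sand, Matrix.mul_one, _root_.trace_vecMulVec, dotProduct_comm, hu]
  have htrI : (1 : Matrix (Fin d) (Fin d) ℂ).trace = (d : ℂ) := by simp [Matrix.trace_one]
  rw [htrI]
  push_cast
  ring

lemma pure_pair_bound {Q : Matrix (Fin d × Fin d) (Fin d × Fin d) ℂ}
    (hQ : Q.PosSemidef) (hQ1 : ((1 : Matrix (Fin d × Fin d) (Fin d × Fin d) ℂ) - Q).PosSemidef)
    {u w : Fin d → ℂ} (hu : star u ⬝ᵥ u = 1) (hw : star w ⬝ᵥ w = 1)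
    {g₀ : ℝ} (hg0 : 1 / 2 ≤ g₀) (hg1 : g₀ ≤ 1) :
    g₀ * ((cloning d (vecMulVec u (star u)) * Q).trace).re
      - (1 - g₀) * ((cloning d (vecMulVec w (star w)) * Q).trace).re
    ≤ (d * g₀ + 2 * g₀ - 1) / (d + 1) := by
  set ρu := vecMulVec u (star u) with hρu
  set ρw := vecMulVec w (star w) with hρw
  set Mu := symProj d * (ρu ⊗ₖ (1 : Matrix (Fin d) (Fin d) ℂ)) * symProj d with hMu
  set Mw := symProj d * (ρw ⊗ₖ (1 : Matrix (Fin d) (Fin d) ℂ)) * symProj d with hMw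
  set t := ((Mu * Q).trace).re with ht
  set s := ((Mw * Q).trace).re with hs
  have hMupsd : Mu.PosSemidef :=
    sand_posSemidef (kron_posSemidef (vecMulVec_posSemidef u) posSemidef_one')
  have hMwpsd : Mw.PosSemidef :=
    sand_posSemidef (kron_posSemidef (vecMulVec_posSemidef w) posSemidef_one')
  have f1 : t ≤ ((d : ℝ) + 1) / 2 := by
    have h0 := psd_mul_trace_nonneg hMupsd hQ1
    rw [Matrix.mul_sub, Matrix.mul_one, Matrix.trace_sub, Complex.sub_re] at h0
    have h1 := Mu_trace (d := d) hu
    rw [← hρu, ← hMu] at h1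
    rw [h1, Complex.ofReal_re] at h0
    linarith
  have f2 : 0 ≤ s := psd_mul_trace_nonneg hMwpsd hQ
  have f3 : t - s ≤ (d : ℝ) / 2 := by
    set Xp := symProj d * (ρu ⊗ₖ ((1 : Matrix (Fin d) (Fin d) ℂ) - ρw)) * symProj d with hXp
    set Xm := symProj d * (((1 : Matrix (Fin d) (Fin d) ℂ) - ρu) ⊗ₖ ρw) * symProj d with hXm
    have hXppsd : Xp.PosSemidef :=
      sand_posSemidef (kron_posSemidef (vecMulVec_posSemidef u) (proj_compl_posSemidef hw))
    have hXmpsd : Xm.PosSemidef :=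
      sand_posSemidef (kron_posSemidef (proj_compl_posSemidef hu) (vecMulVec_posSemidef w))
    have hid : Mu - Mw = Xp - Xm := by
      rw [hMu, hMw, hXp, hXm, kron_sub_right, kron_sub_left]
      rw [Matrix.mul_sub, Matrix.sub_mul, Matrix.mul_sub, Matrix.sub_mul]
      simp only [sand_kron]
      module
    have htrXp : (Xp.trace).re = ((d : ℝ) - Complex.normSq (star w ⬝ᵥ u)) / 2 := by
      have htruw : (ρu * ρw).trace = ((Complex.normSq (star w ⬝ᵥ u) : ℝ) : ℂ) := by
        rw [hρu, hρw, vecMulVec_mul_vecMulVec', Matrix.trace_smul, _root_.trace_vecMulVec, smul_eq_mul]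
        rw [dotProduct_comm u (star w), star_dot_comm u w, mul_comm, RCLike.star_def,
          Complex.mul_conj]
      have e : Xp.trace = ((((d : ℝ) - Complex.normSq (star w ⬝ᵥ u)) / 2 : ℝ) : ℂ) := by
        rw [hXp, trace_sand, Matrix.mul_sub, Matrix.mul_one, Matrix.trace_sub, Matrix.trace_sub,
          htruw]
        have htrI : (1 : Matrix (Fin d) (Fin d) ℂ).trace = (d : ℂ) := by simp [Matrix.trace_one]
        have htru : ρu.trace = 1 := by rw [hρu, _root_.trace_vecMulVec, dotProduct_comm, hu]
        have htrw : ρw.trace = 1 := by rw [hρw, _root_.trace_vecMulVec, dotProduct_comm, hw]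
        rw [htrI, htru, htrw]
        push_cast
        ring
      rw [e, Complex.ofReal_re]
    have hb1 : ((Xp * Q).trace).re ≤ (Xp.trace).re := by
      have h0 := psd_mul_trace_nonneg hXppsd hQ1
      rw [Matrix.mul_sub, Matrix.mul_one, Matrix.trace_sub, Complex.sub_re] at h0
      linarith
    have hb2 : 0 ≤ ((Xm * Q).trace).re := psd_mul_trace_nonneg hXmpsd hQ
    have e2 : t - s = ((Xp * Q).trace).re - ((Xm * Q).trace).re := by
      have h3 : (Mu - Mw) * Q = (Xp - Xm) * Q := by rw [hid]
      rw [Matrix.sub_mul, Matrix.sub_mul] at h3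
      have h4 := congrArg (fun M => (Matrix.trace M).re) h3
      simpa [Matrix.trace_sub, Complex.sub_re] using h4
    have hnq : 0 ≤ Complex.normSq (star w ⬝ᵥ u) := Complex.normSq_nonneg _
    rw [e2]
    calc ((Xp * Q).trace).re - ((Xm * Q).trace).re ≤ ((Xp * Q).trace).re := by linarith
      _ ≤ (Xp.trace).re := hb1
      _ ≤ (d : ℝ) / 2 := by rw [htrXp]; linarith
  -- convert cloning to (2/(d+1)) * trace
  have hconv : ∀ (M : Matrix (Fin d × Fin d) (Fin d × Fin d) ℂ),
      ((((2 / (d + 1) : ℝ) : ℂ) • M * Q).trace).re = (2 / ((d : ℝ) + 1)) * ((M * Q).trace).re := by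
    intro M
    rw [Matrix.smul_mul, Matrix.trace_smul, smul_eq_mul, Complex.re_ofReal_mul]
  have hcu : ((cloning d ρu * Q).trace).re = (2 / ((d : ℝ) + 1)) * t := by
    rw [cloning, ← hMu]; exact hconv Mu
  have hcw : ((cloning d ρw * Q).trace).re = (2 / ((d : ℝ) + 1)) * s := by
    rw [cloning, ← hMw]; exact hconv Mw
  rw [hcu, hcw]
  have hdpos : (0:ℝ) < (d : ℝ) + 1 := by positivity
  have key : 2 * (g₀ * t - (1 - g₀) * s) ≤ (d : ℝ) * g₀ + 2 * g₀ - 1 := by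
    nlinarith [mul_le_mul_of_nonneg_left f3 (by linarith : (0:ℝ) ≤ 1 - g₀),
      mul_le_mul_of_nonneg_left f1 (by linarith : (0:ℝ) ≤ 2 * g₀ - 1)]
  calc g₀ * (2 / ((d : ℝ) + 1) * t) - (1 - g₀) * (2 / ((d : ℝ) + 1) * s)
      = (2 * (g₀ * t - (1 - g₀) * s)) / ((d : ℝ) + 1) := by ring
    _ ≤ ((d : ℝ) * g₀ + 2 * g₀ - 1) / ((d : ℝ) + 1) := by gcongr

lemma cloning_trace_decomp (ρ : Matrix (Fin d) (Fin d) ℂ) (hρ : ρ.IsHermitian)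
    (Q : Matrix (Fin d × Fin d) (Fin d × Fin d) ℂ) :
    ((cloning d ρ * Q).trace).re
      = ∑ i, hρ.eigenvalues i *
          ((cloning d (vecMulVec (⇑(hρ.eigenvectorBasis i)) (star ⇑(hρ.eigenvectorBasis i)))
            * Q).trace).re := by
  conv_lhs => rw [spectral_sum hρ]
  have hmap : cloning d (∑ i, (hρ.eigenvalues i : ℂ) •
      vecMulVec (⇑(hρ.eigenvectorBasis i)) (star ⇑(hρ.eigenvectorBasis i)))
      = ∑ i, (hρ.eigenvalues i : ℂ) •
          cloning d (vecMulVec (⇑(hρ.eigenvectorBasis i)) (star ⇑(hρ.eigenvectorBasis i))) := by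
    have h1 : cloning d = ⇑(cloningLM d) := rfl
    rw [h1, map_sum]
    simp only [LinearMap.map_smul]
  rw [hmap, Finset.sum_mul, Matrix.trace_sum]
  simp only [Matrix.smul_mul, Matrix.trace_smul, smul_eq_mul]
  rw [Complex.re_sum]
  simp only [Complex.re_ofReal_mul]

lemma density_eigen_sum {ρ : Matrix (Fin d) (Fin d) ℂ} (hρ : IsDensity ρ) :
    ∑ i, hρ.1.1.eigenvalues i = 1 := by
  have h1 : ρ.trace = ∑ i, (hρ.1.1.eigenvalues i : ℂ) := by
    conv_lhs => rw [spectral_sum hρ.1.1]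
    rw [Matrix.trace_sum]
    congr 1; ext i
    rw [Matrix.trace_smul, _root_.trace_vecMulVec, dotProduct_comm, eigenvectorBasis_unit]
    simp
  have h1' := h1.symm.trans hρ.2
  have h2 := congrArg Complex.re h1'
  rw [Complex.re_sum] at h2
  simpa using h2

lemma density_bound {Q : Matrix (Fin d × Fin d) (Fin d × Fin d) ℂ}
    (hQ : Q.PosSemidef) (hQ1 : ((1 : Matrix (Fin d × Fin d) (Fin d × Fin d) ℂ) - Q).PosSemidef)
    {ρa ρb : Matrix (Fin d) (Fin d) ℂ} (ha : IsDensity ρa) (hb : IsDensity ρb)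
    {g₀ : ℝ} (hg0 : 1 / 2 ≤ g₀) (hg1 : g₀ ≤ 1) :
    ((((g₀ : ℂ) • cloning d ρa - ((1 - g₀ : ℝ) : ℂ) • cloning d ρb) * Q).trace).re
      ≤ ((d : ℝ) * g₀ + 2 * g₀ - 1) / ((d : ℝ) + 1) := by
  rw [Matrix.sub_mul, Matrix.trace_sub, Complex.sub_re, Matrix.smul_mul, Matrix.smul_mul,
    Matrix.trace_smul, Matrix.trace_smul, smul_eq_mul, smul_eq_mul,
    Complex.re_ofReal_mul, Complex.re_ofReal_mul]
  rw [cloning_trace_decomp ρa ha.1.1 Q, cloning_trace_decomp ρb hb.1.1 Q]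
  set a : Fin d → ℝ := ha.1.1.eigenvalues with hadef
  set b : Fin d → ℝ := hb.1.1.eigenvalues with hbdef
  set t : Fin d → ℝ := fun i =>
    ((cloning d (vecMulVec (⇑(ha.1.1.eigenvectorBasis i)) (star ⇑(ha.1.1.eigenvectorBasis i)))
      * Q).trace).re with htdef
  set s : Fin d → ℝ := fun j =>
    ((cloning d (vecMulVec (⇑(hb.1.1.eigenvectorBasis j)) (star ⇑(hb.1.1.eigenvectorBasis j)))
      * Q).trace).re with hsdef
  set β := ((d : ℝ) * g₀ + 2 * g₀ - 1) / ((d : ℝ) + 1) with hβ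
  have hasum : ∑ i, a i = 1 := density_eigen_sum ha
  have hbsum : ∑ j, b j = 1 := density_eigen_sum hb
  have ha0 : ∀ i, 0 ≤ a i := fun i => ha.1.eigenvalues_nonneg i
  have hb0 : ∀ j, 0 ≤ b j := fun j => hb.1.eigenvalues_nonneg j
  have hpair : ∀ i j, g₀ * t i - (1 - g₀) * s j ≤ β := by
    intro i j
    exact pure_pair_bound hQ hQ1 (eigenvectorBasis_unit ha.1.1 i)
      (eigenvectorBasis_unit hb.1.1 j) hg0 hg1
  have e : g₀ * (∑ i, a i * t i) - (1 - g₀) * (∑ j, b j * s j)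
      = ∑ i, ∑ j, (a i * b j) * (g₀ * t i - (1 - g₀) * s j) := by
    have e1 : ∀ i, ∑ j, (a i * b j) * (g₀ * t i - (1 - g₀) * s j)
        = a i * (g₀ * t i) * (∑ j, b j) - a i * ((1 - g₀) * (∑ j, b j * s j)) := by
      intro i
      rw [Finset.mul_sum, Finset.mul_sum, Finset.mul_sum, ← Finset.sum_sub_distrib]
      congr 1; ext j; ring
    rw [Finset.sum_congr rfl (fun i _ => e1 i), hbsum]
    simp only [mul_one]
    rw [Finset.sum_sub_distrib]
    have e2 : ∑ i, a i * (g₀ * t i) = g₀ * ∑ i, a i * t i := by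
      rw [Finset.mul_sum]; congr 1; ext i; ring
    have e3 : ∑ i, a i * ((1 - g₀) * ∑ j, b j * s j)
        = (∑ i, a i) * ((1 - g₀) * ∑ j, b j * s j) := by
      rw [← Finset.sum_mul]
    rw [e2, e3, hasum, one_mul]
  rw [e]
  calc ∑ i, ∑ j, (a i * b j) * (g₀ * t i - (1 - g₀) * s j)
      ≤ ∑ i, ∑ j, (a i * b j) * β := by
        refine Finset.sum_le_sum fun i _ => Finset.sum_le_sum fun j _ => ?_
        exact mul_le_mul_of_nonneg_left (hpair i j) (mul_nonneg (ha0 i) (hb0 j))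
    _ = β := by
        have h4 : ∑ i, ∑ j, (a i * b j) = (1 : ℝ) := by
          have : ∀ i, ∑ j, a i * b j = a i := by
            intro i; rw [← Finset.mul_sum, hbsum, mul_one]
          rw [Finset.sum_congr rfl (fun i _ => this i), hasum]
        have h5 : ∑ i, ∑ j, (a i * b j) * β = (∑ i, ∑ j, (a i * b j)) * β := by
          rw [Finset.sum_mul]
          congr 1; ext i; rw [Finset.sum_mul]
        rw [h5, h4, one_mul]

lemma traceNorm_bound {ρa ρb : Matrix (Fin d) (Fin d) ℂ} (ha : IsDensity ρa) (hb : IsDensity ρb)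
    {g₀ : ℝ} (hg0 : 1 / 2 ≤ g₀) (hg1 : g₀ ≤ 1) :
    traceNorm ((g₀ : ℂ) • cloning d ρa - ((1 - g₀ : ℝ) : ℂ) • cloning d ρb)
      ≤ ((d : ℝ) + 2 * g₀ - 1) / ((d : ℝ) + 1) := by
  set X := (g₀ : ℂ) • cloning d ρa - ((1 - g₀ : ℝ) : ℂ) • cloning d ρb with hX
  have hXherm : X.IsHermitian := by
    have h1 := cloning_isHermitian ha.1.1
    have h2 := cloning_isHermitian hb.1.1
    rw [hX, Matrix.IsHermitian, conjTranspose_sub, conjTranspose_smul, conjTranspose_smul,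
      h1.eq, h2.eq]
    simp [Complex.star_def, Complex.conj_ofReal]
  set lam := hXherm.eigenvalues with hlam
  set U := hXherm.eigenvectorUnitary with hU
  have hspec : X = (U : Matrix (Fin d × Fin d) (Fin d × Fin d) ℂ)
      * diagonal (fun i => ((lam i : ℝ) : ℂ))
      * (star U : Matrix (Fin d × Fin d) (Fin d × Fin d) ℂ) := by
    simpa [Function.comp_def] using hXherm.spectral_theorem
  have hCpsd := posSemidef_conj_diag U (f := fun i => |lam i|) (fun i => abs_nonneg _)
  have hCC : ((U : Matrix (Fin d × Fin d) (Fin d × Fin d) ℂ)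
        * diagonal (fun i => ((|lam i| : ℝ) : ℂ)) * (star U : Matrix _ _ ℂ))
      * ((U : Matrix _ _ ℂ) * diagonal (fun i => ((|lam i| : ℝ) : ℂ)) * (star U : Matrix _ _ ℂ))
      = Xᴴ * X := by
    rw [hXherm.eq]
    conv_rhs => rw [hspec]
    rw [conj_mul_conj, conj_mul_conj]
    have hfe : (fun i => ((|lam i| : ℝ) : ℂ) * ((|lam i| : ℝ) : ℂ))
        = fun i => ((lam i : ℝ) : ℂ) * ((lam i : ℝ) : ℂ) := by
      funext i
      rw [← Complex.ofReal_mul, ← Complex.ofReal_mul, abs_mul_abs_self]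
    rw [hfe]
  have htnC : traceNorm X = ∑ i, |lam i| := by
    rw [traceNorm_eq_of_sq hCpsd hCC, trace_unitary_conj, Matrix.trace_diagonal, Complex.re_sum]
    simp
  set Q := (U : Matrix (Fin d × Fin d) (Fin d × Fin d) ℂ)
      * diagonal (fun i => (((if 0 ≤ lam i then (1:ℝ) else 0) : ℝ) : ℂ))
      * (star U : Matrix (Fin d × Fin d) (Fin d × Fin d) ℂ) with hQdef
  have hQpsd : Q.PosSemidef :=
    posSemidef_conj_diag U (f := fun i => if 0 ≤ lam i then (1:ℝ) else 0)
      (fun i => by by_cases h : 0 ≤ lam i <;> simp [h])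
  have hQ1eq : (1 : Matrix (Fin d × Fin d) (Fin d × Fin d) ℂ) - Q
      = (U : Matrix _ _ ℂ) * diagonal (fun i => (((if 0 ≤ lam i then (0:ℝ) else 1) : ℝ) : ℂ))
        * (star U : Matrix _ _ ℂ) := by
    have hsum : Q + (U : Matrix _ _ ℂ)
        * diagonal (fun i => (((if 0 ≤ lam i then (0:ℝ) else 1) : ℝ) : ℂ))
        * (star U : Matrix _ _ ℂ) = 1 := by
      rw [hQdef, ← Matrix.add_mul, ← Matrix.mul_add, diagonal_add]
      have hdiag : (fun i => ((((if 0 ≤ lam i then (1:ℝ) else 0) : ℝ) : ℂ)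
          + (((if 0 ≤ lam i then (0:ℝ) else 1) : ℝ) : ℂ))) = fun _ => (1 : ℂ) := by
        funext i
        by_cases h : 0 ≤ lam i <;> simp [h]
      rw [hdiag, diagonal_one, Matrix.mul_one, unitary_mul_star]
    rw [← hsum]
    abel
  have hQ1psd : ((1 : Matrix (Fin d × Fin d) (Fin d × Fin d) ℂ) - Q).PosSemidef := by
    rw [hQ1eq]
    exact posSemidef_conj_diag U (f := fun i => if 0 ≤ lam i then (0:ℝ) else 1)
      (fun i => by by_cases h : 0 ≤ lam i <;> simp [h])
  have htrQX : ((X * Q).trace).re = ∑ i, (if 0 ≤ lam i then lam i else 0) := by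
    conv_lhs => rw [hspec, hQdef]
    rw [conj_mul_conj, trace_unitary_conj, Matrix.trace_diagonal, Complex.re_sum]
    refine Finset.sum_congr rfl fun i _ => ?_
    rw [← Complex.ofReal_mul, Complex.ofReal_re]
    split <;> simp
  have htrX : (X.trace).re = 2 * g₀ - 1 := by
    rw [hX, Matrix.trace_sub, Matrix.trace_smul, Matrix.trace_smul, cloning_trace, cloning_trace,
      ha.2, hb.2, smul_eq_mul, smul_eq_mul, mul_one, mul_one, Complex.sub_re, Complex.ofReal_re]
    simp
    ring
  have hsumlam : ∑ i, lam i = (X.trace).re := by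
    conv_rhs => rw [hspec]
    rw [trace_unitary_conj, Matrix.trace_diagonal, Complex.re_sum]
    simp
  have hQbd : ((X * Q).trace).re ≤ ((d : ℝ) * g₀ + 2 * g₀ - 1) / ((d : ℝ) + 1) := by
    rw [hX]
    exact density_bound hQpsd hQ1psd ha hb hg0 hg1
  have habs : ∑ i, |lam i| = 2 * (∑ i, (if 0 ≤ lam i then lam i else 0)) - ∑ i, lam i := by
    rw [Finset.mul_sum, ← Finset.sum_sub_distrib]
    refine Finset.sum_congr rfl fun i _ => ?_
    by_cases h : 0 ≤ lam i
    · rw [if_pos h, abs_of_nonneg h]; ring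
    · rw [if_neg h, abs_of_neg (lt_of_not_ge h)]; ring
  have hdpos : (0:ℝ) < (d : ℝ) + 1 := by positivity
  have harith : 2 * (((d : ℝ) * g₀ + 2 * g₀ - 1) / ((d : ℝ) + 1)) - (2 * g₀ - 1)
      = ((d : ℝ) + 2 * g₀ - 1) / ((d : ℝ) + 1) := by
    field_simp
    ring
  rw [htnC, habs, hsumlam, htrX, ← htrQX]
  linarith


/-- binary discrimination utility of the 1 → 2 universal optimal cloning
channel. -/
theorem stmt16 {d : ℕ} (hd : 2 ≤ d) (g₀ : ℝ) (hg0 : 1 / 2 ≤ g₀) (hg1 : g₀ ≤ 1)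
    (v₀ v₁ : Fin d → ℂ)
    (h₀ : star v₀ ⬝ᵥ v₀ = 1) (h₁ : star v₁ ⬝ᵥ v₁ = 1) (h01 : star v₀ ⬝ᵥ v₁ = 0) :
    helstromUtility (cloning d) g₀ = (d + g₀) / (d + 1) ∧
    traceNorm ((g₀ : ℂ) • cloning d (Matrix.vecMulVec v₀ (star v₀))
        - ((1 - g₀ : ℝ) : ℂ) • cloning d (Matrix.vecMulVec v₁ (star v₁)))
      = (d + 2 * g₀ - 1) / (d + 1) := by
  have part2 := pure_traceNorm hd hg0 hg1 v₀ v₁ h₀ h₁ h01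
  refine ⟨?_, part2⟩
  have hdpos : (0:ℝ) < (d : ℝ) + 1 := by positivity
  rw [helstromUtility]
  apply IsGreatest.csSup_eq
  constructor
  · refine ⟨Matrix.vecMulVec v₀ (star v₀), Matrix.vecMulVec v₁ (star v₁),
      ⟨vecMulVec_posSemidef v₀, ?_⟩, ⟨vecMulVec_posSemidef v₁, ?_⟩, ?_⟩
    · rw [_root_.trace_vecMulVec, dotProduct_comm, h₀]
    · rw [_root_.trace_vecMulVec, dotProduct_comm, h₁]
    · rw [part2]
      field_simp
      ring
  · rintro u ⟨ρa, ρb, hA, hB, rfl⟩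
    have hbd := traceNorm_bound hA hB hg0 hg1
    have heq : (1 + ((d : ℝ) + 2 * g₀ - 1) / ((d : ℝ) + 1)) / 2 = ((d : ℝ) + g₀) / ((d : ℝ) + 1) := by
      field_simp
      ring
    linarith

end
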